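/- arXiv:2502.16029 — 3 statements merged into one kernel-verified Lean document; each statement's English description precedes it below -/
import Mathlib

section
/- For any complex number a with Re(a) > 0 and any self-adjoint operator K on a finite-dimensional Hilbert space (equivalently, Hermitian matrix K), one has exp(a·K²) = √(a/π) · ∫_{-∞}^{∞} exp(-a·p²) · exp(-2a·K·p) dp, where the integral is taken entrywise (Hubbard–Stratonovich transformation). -/
open Complex MeasureTheory Matrix

lemma hs_scalar (a : ℂ) (ha : 0 < a.re) (μ : ℝ) :
    (a / (Real.pi : ℂ)) ^ (1 / 2 : ℂ) *
      ∫ p : ℝ, Complex.exp (-a * (p : ℂ) ^ 2) * Complex.exp (-(2 * a * (p : ℂ)) * μ) =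
    Complex.exp (a * (μ : ℂ) ^ 2) := by
  have h : ∀ p : ℝ, Complex.exp (-a * (p : ℂ) ^ 2) * Complex.exp (-(2 * a * (p : ℂ)) * μ)
      = Complex.exp (-a * (p : ℂ) ^ 2 + (-(2 * a * μ)) * p + 0) := by
    intro p; rw [← Complex.exp_add]; ring_nf
  simp_rw [h]
  rw [integral_cexp_quadratic (by simpa using ha) (-(2 * a * μ)) 0]
  have ha0 : a ≠ 0 := fun h => by simp [h] at ha
  have hpi : (Real.pi : ℂ) ≠ 0 := by exact_mod_cast Real.pi_ne_zero
  have harg : (↑Real.pi / a).arg ≠ Real.pi := by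
    intro h
    have := Complex.arg_eq_pi_iff.mp h
    have hre : 0 < ((Real.pi : ℂ) / a).re := by
      rw [Complex.div_re]
      simp only [Complex.ofReal_re, Complex.ofReal_im, zero_mul, zero_div, add_zero]
      have := Real.pi_pos
      have hn : 0 < Complex.normSq a := Complex.normSq_pos.mpr ha0
      positivity
    linarith [this.1]
  have key : (a / (Real.pi : ℂ)) ^ (1 / 2 : ℂ) * (↑Real.pi / -(-a)) ^ (1 / 2 : ℂ) = 1 := by
    rw [neg_neg, show a / (Real.pi : ℂ) = ((Real.pi : ℂ) / a)⁻¹ by field_simp,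
      Complex.inv_cpow _ _ harg, inv_mul_cancel₀]
    simp [Complex.cpow_eq_zero_iff, div_ne_zero hpi ha0]
  rw [← mul_assoc, key, one_mul]
  congr 1
  field_simp
  ring

/-- **Hubbard–Stratonovich transformation.** For any complex `a` with `Re a > 0` and any
Hermitian matrix `K`, `exp (a • K^2)` equals `√(a/π) · ∫ exp (-a p²) · exp ((-2 a p) • K) dp`,
the integral of the matrix-valued function taken entrywise. -/
theorem hubbard_stratonovich {n : ℕ} (K : Matrix (Fin n) (Fin n) ℂ)
    (hK : K.IsHermitian) (a : ℂ) (ha : 0 < a.re) :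
    ∀ i j, (NormedSpace.exp (a • K ^ 2)) i j =
      (a / (Real.pi : ℂ)) ^ (1 / 2 : ℂ) *
        ∫ p : ℝ, Complex.exp (-a * (p : ℂ) ^ 2) *
          (NormedSpace.exp ((-(2 * a * (p : ℂ))) • K)) i j := by
  intro i j
  set U : Matrix (Fin n) (Fin n) ℂ := (hK.eigenvectorUnitary : Matrix (Fin n) (Fin n) ℂ) with hUdef
  set μ : Fin n → ℝ := hK.eigenvalues with hμdef
  have hU1 : U * star U = 1 := Matrix.mem_unitaryGroup_iff.mp hK.eigenvectorUnitary.2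
  have hU1' : star U * U = 1 := Matrix.mem_unitaryGroup_iff'.mp hK.eigenvectorUnitary.2
  have hUinv : U⁻¹ = star U := inv_eq_right_inv hU1
  have hUU : IsUnit U := ⟨⟨U, star U, hU1, hU1'⟩, rfl⟩
  have hspec : K = U * diagonal (fun k => (μ k : ℂ)) * star U := hK.spectral_theorem
  -- conjugation formula for exp of conjugated diagonal
  have hconj : ∀ d : Fin n → ℂ, NormedSpace.exp (U * diagonal d * star U)
      = U * diagonal (fun k => Complex.exp (d k)) * star U := by
    intro d
    rw [← hUinv, Matrix.exp_conj U _ hUU, Matrix.exp_diagonal]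
    have : NormedSpace.exp d = fun k => Complex.exp (d k) := by
      rw [Pi.exp_def]
      funext k
      rw [Complex.exp_eq_exp_ℂ]
    rw [this]
  have hsq : a • K ^ 2 = U * diagonal (fun k => a * (μ k : ℂ) ^ 2) * star U := by
    rw [hspec, pow_two]
    simp only [← Matrix.mul_assoc]
    rw [Matrix.mul_assoc (U * diagonal fun k => ((μ k : ℂ))) (star U) U, hU1', Matrix.mul_one,
      Matrix.mul_assoc U, diagonal_mul_diagonal,
      ← smul_mul_assoc, ← mul_smul_comm, ← diagonal_smul]
    have hd : (a • fun i => ((μ i : ℂ)) * μ i) = fun k => a * (μ k : ℂ) ^ 2 := by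
      funext k
      simp only [Pi.smul_apply, smul_eq_mul, sq]
    rw [hd]
  have hsm : ∀ c : ℂ, c • K = U * diagonal (fun k => c * (μ k : ℂ)) * star U := by
    intro c
    rw [hspec, ← smul_mul_assoc, ← mul_smul_comm, ← diagonal_smul]
    have hd : (c • fun k => ((μ k : ℂ))) = fun k => c * (μ k : ℂ) := by
      funext k
      simp only [Pi.smul_apply, smul_eq_mul]
    rw [hd]
  -- entries
  have hent : ∀ d : Fin n → ℂ, (U * diagonal d * star U) i j
      = ∑ k, U i k * d k * (starRingEnd ℂ) (U j k) := by
    intro d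
    rw [Matrix.mul_apply]
    congr 1; funext k
    rw [Matrix.mul_diagonal]
    simp [Matrix.conjTranspose_apply, mul_comm]
  rw [hsq, hconj, hent]
  have hrhs : ∀ p : ℝ, (NormedSpace.exp ((-(2 * a * (p : ℂ))) • K)) i j
      = ∑ k, U i k * Complex.exp (-(2 * a * (p : ℂ)) * μ k) * (starRingEnd ℂ) (U j k) := by
    intro p
    rw [hsm, hconj, hent]
  simp_rw [hrhs, Finset.mul_sum]
  have hInt : ∀ k : Fin n, Integrable (fun p : ℝ => Complex.exp (-a * (p : ℂ) ^ 2) *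
      (U i k * Complex.exp (-(2 * a * (p : ℂ)) * μ k) * (starRingEnd ℂ) (U j k))) := by
    intro k
    have heq : (fun p : ℝ => Complex.exp (-a * (p : ℂ) ^ 2) *
        (U i k * Complex.exp (-(2 * a * (p : ℂ)) * μ k) * (starRingEnd ℂ) (U j k)))
        = fun p : ℝ => (U i k * (starRingEnd ℂ) (U j k)) *
          Complex.exp (-a * (p : ℂ) ^ 2 + (-(2 * a * (μ k : ℂ))) * p + 0) := by
      funext p
      have : Complex.exp (-a * (p : ℂ) ^ 2 + (-(2 * a * (μ k : ℂ))) * p + 0)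
          = Complex.exp (-a * (p : ℂ) ^ 2) * Complex.exp (-(2 * a * (p : ℂ)) * μ k) := by
        rw [← Complex.exp_add]; ring_nf
      rw [this]; ring
    rw [heq]
    exact (integrable_cexp_quadratic ha _ _).const_mul _
  rw [integral_finset_sum _ (fun k _ => hInt k), Finset.mul_sum]
  congr 1; funext k
  have hs := hs_scalar a ha (μ k)
  have hcongr : ∀ p : ℝ, Complex.exp (-a * (p : ℂ) ^ 2) *
      (U i k * Complex.exp (-(2 * a * (p : ℂ)) * μ k) * (starRingEnd ℂ) (U j k))
      = (U i k * (starRingEnd ℂ) (U j k)) *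
        (Complex.exp (-a * (p : ℂ) ^ 2) * Complex.exp (-(2 * a * (p : ℂ)) * μ k)) := by
    intro p; ring
  simp_rw [hcongr]
  rw [integral_const_mul, ← hs]
  ring
end

section
/- For a Hermitian matrix H', τ ∈ ℝ, and m ∈ ℕ, the m-th Hermite-weighted Gaussian transform of the one-parameter unitary group satisfies: (iᵐ/√(π·2^{m-1}·m!)) ∫_{-∞}^{∞} exp(-2p²) Hₘ(√2·p) exp(-2i·τ·H'·p) dp = (τH')ᵐ/√(m!) · exp(-½ τ² H'²), where Hₘ is the m-th (physicists') Hermite polynomial. -/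
/-- The physicists' Hermite polynomial `Hₘ(x) = (-1)ᵐ e^{x²} (d/dx)ᵐ e^{-x²}`. -/
noncomputable def hermitePhys (m : ℕ) (x : ℝ) : ℝ :=
  (-1 : ℝ) ^ m * Real.exp (x ^ 2) * (deriv^[m] (fun t : ℝ => Real.exp (-t ^ 2))) x

open MeasureTheory Real Complex Polynomial

namespace HermiteAux

/-- Polynomials arising from iterated derivatives of the Gaussian `e^{-x²}`. -/
noncomputable def hermPoly : ℕ → Polynomial ℝ
  | 0 => 1
  | (n+1) => derivative (hermPoly n) - Polynomial.C 2 * (Polynomial.X * hermPoly n)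

lemma hasDerivAt_PG (P : Polynomial ℝ) (x : ℝ) :
    HasDerivAt (fun x : ℝ => P.eval x * Real.exp (-x ^ 2))
      ((P.derivative.eval x - 2 * x * P.eval x) * Real.exp (-x ^ 2)) x := by
  have h1 : HasDerivAt (fun x : ℝ => -x ^ 2) (-(2 * x)) x := by
    exact (hasDerivAt_pow 2 x).neg.congr_deriv (by simp)
  have hg : HasDerivAt (fun x : ℝ => Real.exp (-x ^ 2))
      (Real.exp (-x ^ 2) * (-(2 * x))) x := h1.exp
  have : HasDerivAt (fun x : ℝ => P.eval x * Real.exp (-x ^ 2)) _ x := (P.hasDerivAt x).mul hg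
  convert this using 1
  ring

lemma derivIter_phi (n : ℕ) (x : ℝ) :
    deriv^[n] (fun t : ℝ => Real.exp (-t ^ 2)) x
      = (hermPoly n).eval x * Real.exp (-x ^ 2) := by
  induction n generalizing x with
  | zero => simp [hermPoly]
  | succ n ih =>
    rw [Function.iterate_succ_apply']
    have h : deriv^[n] (fun t : ℝ => Real.exp (-t ^ 2))
        = fun x => (hermPoly n).eval x * Real.exp (-x ^ 2) := funext ih
    rw [h, (hasDerivAt_PG (hermPoly n) x).deriv]
    simp only [hermPoly, Polynomial.eval_sub, Polynomial.eval_mul, Polynomial.eval_C,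
      Polynomial.eval_X]
    ring

/-- The complex Gaussian on the real line. -/
noncomputable def ψ : ℝ → ℂ := fun t => Complex.exp (-(t : ℂ) ^ 2)

lemma psi_eq (t : ℝ) : ψ t = ((Real.exp (-t ^ 2) : ℝ) : ℂ) := by
  rw [ψ, show -(t : ℂ) ^ 2 = ((-t ^ 2 : ℝ) : ℂ) by push_cast; ring, ← Complex.ofReal_exp]

lemma iteratedDeriv_psi (n : ℕ) (x : ℝ) :
    iteratedDeriv n ψ x = ((deriv^[n] (fun t : ℝ => Real.exp (-t ^ 2)) x : ℝ) : ℂ) := by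
  induction n generalizing x with
  | zero => simpa using psi_eq x
  | succ n ih =>
    rw [iteratedDeriv_succ]
    have h1 : iteratedDeriv n ψ
        = fun y : ℝ => (((hermPoly n).eval y * Real.exp (-y ^ 2) : ℝ) : ℂ) := by
      funext y; rw [ih, derivIter_phi]
    rw [h1, Function.iterate_succ_apply']
    have h2 : deriv^[n] (fun t : ℝ => Real.exp (-t ^ 2))
        = fun y => (hermPoly n).eval y * Real.exp (-y ^ 2) := funext (derivIter_phi n)
    rw [h2, ((hasDerivAt_PG (hermPoly n) x).ofReal_comp).deriv,
      (hasDerivAt_PG (hermPoly n) x).deriv]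

lemma contDiff_psi : ContDiff ℝ ⊤ ψ :=
  (Complex.contDiff_exp (𝕜 := ℝ)).comp ((Complex.ofRealCLM.contDiff.pow 2).neg)

/-- Scaled complex Gaussian `G p = e^{-2p²}`. -/
noncomputable def G : ℝ → ℂ := fun p => ψ (Real.sqrt 2 * p)

lemma contDiff_G : ContDiff ℝ ⊤ G :=
  contDiff_psi.comp (contDiff_const.mul contDiff_id)

lemma G_eq (p : ℝ) : G p = Complex.exp (-2 * (p : ℂ) ^ 2) := by
  rw [G, ψ]
  congr 1
  push_cast
  rw [mul_pow]
  norm_cast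
  rw [Real.sq_sqrt (by norm_num : (0:ℝ) ≤ 2)]
  push_cast
  ring

lemma sqrt2_pow_ne (m : ℕ) : ((Real.sqrt 2 : ℝ) ^ m : ℝ) ≠ 0 :=
  pow_ne_zero _ (by positivity)

lemma iteratedDeriv_G (m : ℕ) (p : ℝ) :
    iteratedDeriv m G p
      = ((Real.sqrt 2 ^ m : ℝ) : ℂ) *
        (((hermPoly m).eval (Real.sqrt 2 * p) * Real.exp (-2 * p ^ 2) : ℝ) : ℂ) := by
  have h : iteratedDeriv m (fun p : ℝ => ψ (Real.sqrt 2 * p))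
      = fun p => (Real.sqrt 2) ^ m • iteratedDeriv m ψ (Real.sqrt 2 * p) :=
    iteratedDeriv_comp_const_smul (contDiff_psi.of_le le_top) (Real.sqrt 2)
  have h2 : iteratedDeriv m G p = (Real.sqrt 2) ^ m • iteratedDeriv m ψ (Real.sqrt 2 * p) :=
    congrFun h p
  rw [h2, iteratedDeriv_psi, derivIter_phi]
  have h3 : -(Real.sqrt 2 * p) ^ 2 = -2 * p ^ 2 := by
    rw [mul_pow, Real.sq_sqrt (by norm_num : (0:ℝ) ≤ 2)]; ring
  rw [h3, Complex.real_smul]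

/-- The integrand in terms of the iterated derivative of `G`. -/
lemma integrand_eq (m : ℕ) (p : ℝ) :
    Complex.exp (-2 * (p : ℂ) ^ 2) * (hermitePhys m (Real.sqrt 2 * p) : ℂ)
      = (-1 : ℂ) ^ m * (((Real.sqrt 2 ^ m : ℝ) : ℂ))⁻¹ * iteratedDeriv m G p := by
  rw [iteratedDeriv_G]
  have hne : ((Real.sqrt 2 ^ m : ℝ) : ℂ) ≠ 0 :=
    Complex.ofReal_ne_zero.mpr (sqrt2_pow_ne m)
  rw [hermitePhys, derivIter_phi]
  have h3 : (Real.sqrt 2 * p) ^ 2 = 2 * p ^ 2 := by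
    rw [mul_pow, Real.sq_sqrt (by norm_num : (0:ℝ) ≤ 2)]
  rw [h3, mul_assoc ((-1 : ℂ) ^ m), inv_mul_cancel_left₀ hne]
  simp only [← neg_mul]
  rw [show Complex.exp (-2 * (p : ℂ) ^ 2) = ((Real.exp (-2 * p ^ 2) : ℝ) : ℂ) by
    rw [show -2 * (p : ℂ) ^ 2 = ((-2 * p ^ 2 : ℝ) : ℂ) by push_cast; ring,
      ← Complex.ofReal_exp], ← Complex.ofReal_mul]
  have hr : Real.exp (-2 * p ^ 2) *
      ((-1 : ℝ) ^ m * Real.exp (2 * p ^ 2) *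
        ((hermPoly m).eval (Real.sqrt 2 * p) * Real.exp (-2 * p ^ 2)))
      = (-1 : ℝ) ^ m * ((hermPoly m).eval (Real.sqrt 2 * p) * Real.exp (-2 * p ^ 2)) := by
    have h1 : Real.exp (-2 * p ^ 2) * Real.exp (2 * p ^ 2) = 1 := by
      rw [← Real.exp_add]; norm_num
    calc Real.exp (-2 * p ^ 2) *
        ((-1 : ℝ) ^ m * Real.exp (2 * p ^ 2) *
          ((hermPoly m).eval (Real.sqrt 2 * p) * Real.exp (-2 * p ^ 2)))
        = (Real.exp (-2 * p ^ 2) * Real.exp (2 * p ^ 2)) *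
          ((-1 : ℝ) ^ m * ((hermPoly m).eval (Real.sqrt 2 * p) * Real.exp (-2 * p ^ 2))) := by
          ring
      _ = (-1 : ℝ) ^ m * ((hermPoly m).eval (Real.sqrt 2 * p) * Real.exp (-2 * p ^ 2)) := by
          rw [h1]; ring
  rw [hr]
  push_cast
  ring

lemma integrable_poly_gaussian (b : ℝ) (hb : 0 < b) (P : Polynomial ℝ) :
    Integrable fun x : ℝ => P.eval x * Real.exp (-b * x ^ 2) := by
  induction P using Polynomial.induction_on' with
  | add p q hp hq => simpa [add_mul, Pi.add_def] using hp.add hq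
  | monomial k a =>
    have h : Integrable fun x : ℝ => x ^ k * Real.exp (-b * x ^ 2) := by
      have := integrable_rpow_mul_exp_neg_mul_sq hb
        (s := (k : ℝ)) (lt_of_lt_of_le (by norm_num) (Nat.cast_nonneg k))
      simpa [Real.rpow_natCast] using this
    simpa [Polynomial.eval_monomial, mul_assoc] using h.const_mul a

lemma integrable_iteratedDeriv_G (k : ℕ) : Integrable (iteratedDeriv k G) := by
  have h : iteratedDeriv k G = fun p : ℝ =>
      ((Real.sqrt 2 ^ k : ℝ) : ℂ) *
        (((((hermPoly k).comp (Polynomial.C (Real.sqrt 2) * Polynomial.X)).eval p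
          * Real.exp (-2 * p ^ 2) : ℝ)) : ℂ) := by
    funext p
    rw [iteratedDeriv_G]
    simp [Polynomial.eval_comp]
  rw [h]
  exact ((integrable_poly_gaussian 2 two_pos _).ofReal.const_mul _)

lemma integrable_base (m : ℕ) :
    Integrable fun p : ℝ =>
      Complex.exp (-2 * (p : ℂ) ^ 2) * (hermitePhys m (Real.sqrt 2 * p) : ℂ) := by
  simp_rw [integrand_eq]
  exact (integrable_iteratedDeriv_G m).const_mul _

lemma integrable_base_phase (m : ℕ) (τ lam : ℝ) :
    Integrable fun p : ℝ =>
      Complex.exp (-2 * (p : ℂ) ^ 2) * (hermitePhys m (Real.sqrt 2 * p) : ℂ) *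
        Complex.exp ((-(2 * Complex.I * (τ : ℂ) * (p : ℂ))) * (lam : ℂ)) := by
  have hmeas : AEStronglyMeasurable
      (fun p : ℝ => Complex.exp ((-(2 * Complex.I * (τ : ℂ) * (p : ℂ))) * (lam : ℂ))) volume := by
    apply Continuous.aestronglyMeasurable
    exact Complex.continuous_exp.comp
      ((((continuous_const.mul Complex.continuous_ofReal).neg).mul continuous_const))
  have hb : ∃ C, ∀ p : ℝ,
      ‖Complex.exp ((-(2 * Complex.I * (τ : ℂ) * (p : ℂ))) * (lam : ℂ))‖ ≤ C := by
    refine ⟨1, fun p => ?_⟩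
    rw [show ((-(2 * Complex.I * (τ : ℂ) * (p : ℂ))) * (lam : ℂ))
        = ((-2 * τ * p * lam : ℝ) : ℂ) * Complex.I by push_cast; ring,
      Complex.norm_exp_ofReal_mul_I]
  obtain ⟨C, hC⟩ := hb
  have h := (integrable_base m).bdd_mul hmeas (Filter.Eventually.of_forall hC)
  refine h.congr (Filter.Eventually.of_forall fun p => ?_)
  ring

/-- Fourier transform of the Gaussian `G`. -/
lemma fourierG (w : ℝ) :
    FourierTransform.fourier G w
      = ((Real.pi : ℂ) / 2) ^ (1/2 : ℂ) * Complex.exp (-((Real.pi : ℂ) * w) ^ 2 / 2) := by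
  rw [Real.fourier_real_eq_integral_exp_smul]
  have key := fourierIntegral_gaussian (b := 2) (by norm_num) (-2 * Real.pi * w : ℂ)
  have h1 : ∀ v : ℝ, Complex.exp (((-2 * Real.pi * v * w : ℝ) : ℂ) * Complex.I) • G v
      = Complex.exp (Complex.I * (-2 * Real.pi * w : ℂ) * v) * Complex.exp (-2 * (v : ℂ) ^ 2) := by
    intro v
    rw [smul_eq_mul, G_eq]
    congr 2
    push_cast
    ring
  rw [integral_congr_ae (Filter.Eventually.of_forall h1), key]
  congr 1
  ring

lemma fourier_deriv_G (m : ℕ) (w : ℝ) :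
    FourierTransform.fourier (iteratedDeriv m G) w
      = (2 * (Real.pi : ℂ) * Complex.I * w) ^ m * FourierTransform.fourier G w := by
  have := Real.fourier_iteratedDeriv (N := (⊤ : ℕ∞)) (n := m)
    (contDiff_G.of_le (by exact_mod_cast le_top))
    (fun k _ => integrable_iteratedDeriv_G k) le_top
  have h := congrFun this w
  rwa [smul_eq_mul] at h

/-- Constant identity. -/
lemma const_id (m : ℕ) :
    (2 : ℝ) ^ m * Real.sqrt (Real.pi / 2) * Real.sqrt m.factorial
      = Real.sqrt (Real.pi * 2 ^ (m - 1 : ℤ) * m.factorial) * Real.sqrt 2 ^ m := by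
  have hsq2 : Real.sqrt (2 ^ m) = Real.sqrt 2 ^ m := by
    rw [show ((2:ℝ) ^ m) = ((Real.sqrt 2) ^ m) ^ 2 by
      rw [← pow_mul, mul_comm, pow_mul, Real.sq_sqrt (by norm_num : (0:ℝ) ≤ 2)],
      Real.sqrt_sq (pow_nonneg (Real.sqrt_nonneg 2) m)]
  have harg : Real.pi * 2 ^ (m - 1 : ℤ) * m.factorial
      = (Real.pi / 2 * 2 ^ m) * m.factorial := by
    rw [zpow_sub₀ (by norm_num : (2:ℝ) ≠ 0), zpow_natCast, zpow_one]
    ring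
  rw [harg, Real.sqrt_mul (by positivity), Real.sqrt_mul (by positivity), hsq2]
  have h2 : Real.sqrt 2 ^ m * Real.sqrt 2 ^ m = 2 ^ m := by
    rw [← mul_pow, Real.mul_self_sqrt (by norm_num : (0:ℝ) ≤ 2)]
  calc (2:ℝ) ^ m * Real.sqrt (Real.pi / 2) * Real.sqrt m.factorial
      = Real.sqrt (Real.pi / 2) * Real.sqrt m.factorial * (Real.sqrt 2 ^ m * Real.sqrt 2 ^ m) := by
        rw [h2]; ring
    _ = Real.sqrt (Real.pi / 2) * Real.sqrt 2 ^ m * Real.sqrt (m.factorial) * Real.sqrt 2 ^ m := by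
        ring

/-- The key scalar identity. -/
lemma scalar_main (τ lam : ℝ) (m : ℕ) :
    (Complex.I ^ m / (Real.sqrt (Real.pi * 2 ^ (m - 1 : ℤ) * m.factorial) : ℂ)) *
      ∫ p : ℝ, Complex.exp (-2 * (p : ℂ) ^ 2) * (hermitePhys m (Real.sqrt 2 * p) : ℂ) *
        Complex.exp ((-(2 * Complex.I * (τ : ℂ) * (p : ℂ))) * (lam : ℂ)) =
    ((Real.sqrt m.factorial : ℂ))⁻¹ * ((τ : ℂ) * lam) ^ m *
      Complex.exp (-((τ : ℂ) ^ 2 / 2) * (lam : ℂ) ^ 2) := by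
  set w : ℝ := τ * lam / Real.pi with hw
  have hπ : (Real.pi : ℝ) ≠ 0 := Real.pi_ne_zero
  have hwπ : Real.pi * w = τ * lam := by rw [hw]; field_simp
  -- rewrite the integral as a Fourier transform of the iterated derivative
  have hstep : ∀ p : ℝ,
      Complex.exp (-2 * (p : ℂ) ^ 2) * (hermitePhys m (Real.sqrt 2 * p) : ℂ) *
        Complex.exp ((-(2 * Complex.I * (τ : ℂ) * (p : ℂ))) * (lam : ℂ))
      = (-1 : ℂ) ^ m * (((Real.sqrt 2 ^ m : ℝ) : ℂ))⁻¹ *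
        (Complex.exp (((-2 * Real.pi * p * w : ℝ) : ℂ) * Complex.I) • iteratedDeriv m G p) := by
    intro p
    rw [integrand_eq, smul_eq_mul]
    have hph : Complex.exp ((-(2 * Complex.I * (τ : ℂ) * (p : ℂ))) * (lam : ℂ))
        = Complex.exp (((-2 * Real.pi * p * w : ℝ) : ℂ) * Complex.I) := by
      congr 1
      have : (-2 * Real.pi * p * w : ℝ) = -2 * p * (τ * lam) := by
        rw [hw]; field_simp
      rw [this]
      push_cast
      ring
    rw [hph]
    ring
  rw [integral_congr_ae (Filter.Eventually.of_forall hstep), integral_const_mul,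
    ← Real.fourier_real_eq_integral_exp_smul, fourier_deriv_G, fourierG]
  -- now pure algebra
  have hI : Complex.I ^ m * ((-1 : ℂ) ^ m * (2 * Complex.I) ^ m) = 2 ^ m := by
    have h2 : Complex.I * ((-1 : ℂ) * (2 * Complex.I)) = 2 := by
      rw [show Complex.I * ((-1 : ℂ) * (2 * Complex.I)) = -2 * (Complex.I * Complex.I) by ring,
        Complex.I_mul_I]
      ring
    calc Complex.I ^ m * ((-1 : ℂ) ^ m * (2 * Complex.I) ^ m)
        = (Complex.I * ((-1 : ℂ) * (2 * Complex.I))) ^ m := by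
          conv_rhs => rw [mul_pow, mul_pow]
      _ = 2 ^ m := by rw [h2]
  have hw2 : (2 * (Real.pi : ℂ) * Complex.I * w) ^ m
      = (2 * Complex.I) ^ m * ((τ : ℂ) * lam) ^ m := by
    rw [show (2 * (Real.pi : ℂ) * Complex.I * (w : ℂ)) = 2 * Complex.I * ((Real.pi * w : ℝ) : ℂ) by
      push_cast; ring, hwπ, mul_pow]
    norm_cast
  have hexp : Complex.exp (-((Real.pi : ℂ) * w) ^ 2 / 2)
      = Complex.exp (-((τ : ℂ) ^ 2 / 2) * (lam : ℂ) ^ 2) := by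
    congr 1
    rw [show ((Real.pi : ℂ) * w) = ((Real.pi * w : ℝ) : ℂ) by push_cast; ring, hwπ]
    push_cast
    ring
  rw [hw2, hexp]
  -- cpow to real sqrt
  have hc3 : ((Real.pi : ℂ) / 2) ^ (1/2 : ℂ) = ((Real.sqrt (Real.pi / 2) : ℝ) : ℂ) := by
    rw [show ((Real.pi : ℂ) / 2) = ((Real.pi / 2 : ℝ) : ℂ) by push_cast; ring,
      Real.sqrt_eq_rpow, Complex.ofReal_cpow (by positivity)]
    norm_num
  rw [hc3]
  -- reduce to the constant identity
  have hs : (0:ℝ) < Real.sqrt (Real.pi * 2 ^ (m - 1 : ℤ) * m.factorial) := by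
    apply Real.sqrt_pos.mpr
    have : (0:ℝ) < 2 ^ (m - 1 : ℤ) := zpow_pos (by norm_num) _
    positivity
  have hfact : (0:ℝ) < Real.sqrt m.factorial :=
    Real.sqrt_pos.mpr (by exact_mod_cast m.factorial_pos)
  have hpi2 : (0:ℝ) < Real.sqrt (Real.pi / 2) :=
    Real.sqrt_pos.mpr (by positivity)
  have h2m : (0:ℝ) < Real.sqrt 2 ^ m := by positivity
  have hkey : ((2:ℂ) ^ m) * ((Real.sqrt (Real.pi / 2) : ℝ) : ℂ) * ((Real.sqrt m.factorial : ℝ) : ℂ)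
      = ((Real.sqrt (Real.pi * 2 ^ (m - 1 : ℤ) * m.factorial) : ℝ) : ℂ) *
        ((Real.sqrt 2 ^ m : ℝ) : ℂ) := by
    exact_mod_cast const_id m
  have hsne : ((Real.sqrt (Real.pi * 2 ^ (m - 1 : ℤ) * m.factorial) : ℝ) : ℂ) ≠ 0 :=
    Complex.ofReal_ne_zero.mpr hs.ne'
  have h2ne : ((Real.sqrt 2 ^ m : ℝ) : ℂ) ≠ 0 := Complex.ofReal_ne_zero.mpr h2m.ne'
  have hfne : ((Real.sqrt m.factorial : ℝ) : ℂ) ≠ 0 := Complex.ofReal_ne_zero.mpr hfact.ne'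
  have hfinal : Complex.I ^ m * ((-1 : ℂ) ^ m * (2 * Complex.I) ^ m) *
      ((Real.sqrt (Real.pi / 2) : ℝ) : ℂ) * ((Real.sqrt m.factorial : ℝ) : ℂ)
      = ((Real.sqrt (Real.pi * 2 ^ (m - 1 : ℤ) * m.factorial) : ℝ) : ℂ) *
        ((Real.sqrt 2 ^ m : ℝ) : ℂ) := by
    rw [hI]; exact hkey
  have hco : Complex.I ^ m / ((Real.sqrt (Real.pi * 2 ^ (m - 1 : ℤ) * m.factorial) : ℝ) : ℂ) *
      ((-1 : ℂ) ^ m * (((Real.sqrt 2 ^ m : ℝ) : ℂ))⁻¹ * (2 * Complex.I) ^ m *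
        ((Real.sqrt (Real.pi / 2) : ℝ) : ℂ))
      = (((Real.sqrt m.factorial : ℝ) : ℂ))⁻¹ := by
    have h4 : Complex.I ^ m * ((-1 : ℂ) ^ m * (2 * Complex.I) ^ m) *
        ((Real.sqrt (Real.pi / 2) : ℝ) : ℂ)
        = ((Real.sqrt (Real.pi * 2 ^ (m - 1 : ℤ) * m.factorial) : ℝ) : ℂ) *
          ((Real.sqrt 2 ^ m : ℝ) : ℂ) * (((Real.sqrt m.factorial : ℝ) : ℂ))⁻¹ := by
      rw [eq_mul_inv_iff_mul_eq₀ hfne]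
      linear_combination hfinal
    calc Complex.I ^ m / ((Real.sqrt (Real.pi * 2 ^ (m - 1 : ℤ) * m.factorial) : ℝ) : ℂ) *
        ((-1 : ℂ) ^ m * (((Real.sqrt 2 ^ m : ℝ) : ℂ))⁻¹ * (2 * Complex.I) ^ m *
          ((Real.sqrt (Real.pi / 2) : ℝ) : ℂ))
        = (Complex.I ^ m * ((-1 : ℂ) ^ m * (2 * Complex.I) ^ m) *
            ((Real.sqrt (Real.pi / 2) : ℝ) : ℂ)) *
          ((((Real.sqrt (Real.pi * 2 ^ (m - 1 : ℤ) * m.factorial) : ℝ) : ℂ))⁻¹ *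
            ((((Real.sqrt 2 ^ m : ℝ) : ℂ))⁻¹)) := by
          rw [div_eq_mul_inv]; ring
      _ = (((Real.sqrt (Real.pi * 2 ^ (m - 1 : ℤ) * m.factorial) : ℝ) : ℂ) *
            ((Real.sqrt 2 ^ m : ℝ) : ℂ) * (((Real.sqrt m.factorial : ℝ) : ℂ))⁻¹) *
          ((((Real.sqrt (Real.pi * 2 ^ (m - 1 : ℤ) * m.factorial) : ℝ) : ℂ))⁻¹ *
            ((((Real.sqrt 2 ^ m : ℝ) : ℂ))⁻¹)) := by rw [h4]
      _ = (((Real.sqrt m.factorial : ℝ) : ℂ))⁻¹ *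
          (((Real.sqrt (Real.pi * 2 ^ (m - 1 : ℤ) * m.factorial) : ℝ) : ℂ) *
            (((Real.sqrt (Real.pi * 2 ^ (m - 1 : ℤ) * m.factorial) : ℝ) : ℂ))⁻¹) *
          (((Real.sqrt 2 ^ m : ℝ) : ℂ) * ((((Real.sqrt 2 ^ m : ℝ) : ℂ))⁻¹)) := by ring
      _ = (((Real.sqrt m.factorial : ℝ) : ℂ))⁻¹ := by
          rw [mul_inv_cancel₀ hsne, mul_inv_cancel₀ h2ne]; ring
  calc Complex.I ^ m / ((Real.sqrt (Real.pi * 2 ^ (m - 1 : ℤ) * m.factorial) : ℝ) : ℂ) *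
        ((-1 : ℂ) ^ m * (((Real.sqrt 2 ^ m : ℝ) : ℂ))⁻¹ *
          ((2 * Complex.I) ^ m * ((τ : ℂ) * lam) ^ m *
            (((Real.sqrt (Real.pi / 2) : ℝ) : ℂ) *
              Complex.exp (-((τ : ℂ) ^ 2 / 2) * (lam : ℂ) ^ 2))))
      = (Complex.I ^ m / ((Real.sqrt (Real.pi * 2 ^ (m - 1 : ℤ) * m.factorial) : ℝ) : ℂ) *
          ((-1 : ℂ) ^ m * (((Real.sqrt 2 ^ m : ℝ) : ℂ))⁻¹ * (2 * Complex.I) ^ m *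
            ((Real.sqrt (Real.pi / 2) : ℝ) : ℂ))) *
        (((τ : ℂ) * lam) ^ m * Complex.exp (-((τ : ℂ) ^ 2 / 2) * (lam : ℂ) ^ 2)) := by ring
    _ = (((Real.sqrt m.factorial : ℝ) : ℂ))⁻¹ *
        (((τ : ℂ) * lam) ^ m * Complex.exp (-((τ : ℂ) ^ 2 / 2) * (lam : ℂ) ^ 2)) := by rw [hco]
    _ = ((Real.sqrt m.factorial : ℂ))⁻¹ * ((τ : ℂ) * lam) ^ m *
        Complex.exp (-((τ : ℂ) ^ 2 / 2) * (lam : ℂ) ^ 2) := by ring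

end HermiteAux

/-- **Hermite-weighted Gaussian transform.** For a Hermitian matrix `H'`, `τ ∈ ℝ`, `m ∈ ℕ`:
`(iᵐ/√(π·2^{m-1}·m!)) ∫ exp(-2p²) Hₘ(√2 p) exp(-2iτpH') dp = (τH')ᵐ/√m! · exp(-(τ²/2)H'²)`,
entrywise. -/
theorem hermite_weighted_gaussian_transform {n : ℕ}
    (H : Matrix (Fin n) (Fin n) ℂ) (hH : H.IsHermitian) (τ : ℝ) (m : ℕ) :
    ∀ i j,
      (Complex.I ^ m / (Real.sqrt (Real.pi * 2 ^ (m - 1 : ℤ) * m.factorial) : ℂ)) *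
        ∫ p : ℝ, Complex.exp (-2 * (p : ℂ) ^ 2) * (hermitePhys m (Real.sqrt 2 * p) : ℂ) *
          (NormedSpace.exp ((-(2 * Complex.I * (τ : ℂ) * (p : ℂ))) • H)) i j =
      (((Real.sqrt m.factorial : ℂ))⁻¹ •
        (((τ : ℂ) • H) ^ m * NormedSpace.exp ((-((τ : ℂ) ^ 2 / 2)) • H ^ 2))) i j := by
  intro i j
  classical
  set Λ : Fin n → ℝ := hH.eigenvalues with hΛ
  set U : (Matrix (Fin n) (Fin n) ℂ)ˣ := Unitary.toUnits hH.eigenvectorUnitary with hUdef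
  have hmid : ((U⁻¹ : (Matrix (Fin n) (Fin n) ℂ)ˣ) : Matrix (Fin n) (Fin n) ℂ) *
      (U : Matrix (Fin n) (Fin n) ℂ) = 1 := by
    rw [← Units.val_mul, inv_mul_cancel, Units.val_one]
  have spec : H = (U : Matrix (Fin n) (Fin n) ℂ) * Matrix.diagonal (fun k => (Λ k : ℂ)) *
      ((U⁻¹ : (Matrix (Fin n) (Fin n) ℂ)ˣ) : Matrix (Fin n) (Fin n) ℂ) :=
    hH.spectral_theorem.trans rfl
  have hconj : ∀ c : ℂ, c • H = (U : Matrix (Fin n) (Fin n) ℂ) *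
      Matrix.diagonal (fun k => c * (Λ k : ℂ)) *
      ((U⁻¹ : (Matrix (Fin n) (Fin n) ℂ)ˣ) : Matrix (Fin n) (Fin n) ℂ) := by
    intro c
    conv_rhs => rw [show (fun k => c * (Λ k : ℂ)) = c • fun k => (Λ k : ℂ) from rfl,
      Matrix.diagonal_smul, Matrix.mul_smul, Matrix.smul_mul]
    rw [← spec]
  have hexpd : ∀ c : ℂ, NormedSpace.exp (c • H)
      = (U : Matrix (Fin n) (Fin n) ℂ) *
        Matrix.diagonal (fun k => Complex.exp (c * (Λ k : ℂ))) *
        ((U⁻¹ : (Matrix (Fin n) (Fin n) ℂ)ˣ) : Matrix (Fin n) (Fin n) ℂ) := by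
    intro c
    rw [hconj c, Matrix.exp_units_conj, Matrix.exp_diagonal, Pi.exp_def]
    simp only [← Complex.exp_eq_exp_ℂ]
  have hexp_entry : ∀ c : ℂ, (NormedSpace.exp (c • H)) i j
      = ∑ k, (U : Matrix (Fin n) (Fin n) ℂ) i k * Complex.exp (c * (Λ k : ℂ)) *
          ((U⁻¹ : (Matrix (Fin n) (Fin n) ℂ)ˣ) : Matrix (Fin n) (Fin n) ℂ) k j := by
    intro c
    rw [hexpd c, Matrix.mul_apply]
    refine Finset.sum_congr rfl fun k _ => ?_
    rw [Matrix.mul_diagonal]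
  -- RHS diagonalization
  have hpow : ((τ : ℂ) • H) ^ m = (U : Matrix (Fin n) (Fin n) ℂ) *
      Matrix.diagonal (fun k => ((τ : ℂ) * (Λ k : ℂ)) ^ m) *
      ((U⁻¹ : (Matrix (Fin n) (Fin n) ℂ)ˣ) : Matrix (Fin n) (Fin n) ℂ) := by
    rw [hconj, Units.conj_pow, Matrix.diagonal_pow]
    rfl
  have hsq : H ^ 2 = (U : Matrix (Fin n) (Fin n) ℂ) *
      Matrix.diagonal (fun k => ((Λ k : ℂ)) ^ 2) *
      ((U⁻¹ : (Matrix (Fin n) (Fin n) ℂ)ˣ) : Matrix (Fin n) (Fin n) ℂ) := by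
    conv_lhs => rw [spec]
    rw [Units.conj_pow, Matrix.diagonal_pow]
    rfl
  have hconj2 : (-((τ : ℂ) ^ 2 / 2)) • H ^ 2 = (U : Matrix (Fin n) (Fin n) ℂ) *
      Matrix.diagonal (fun k => (-((τ : ℂ) ^ 2 / 2)) * (Λ k : ℂ) ^ 2) *
      ((U⁻¹ : (Matrix (Fin n) (Fin n) ℂ)ˣ) : Matrix (Fin n) (Fin n) ℂ) := by
    conv_rhs => rw [show (fun k => (-((τ : ℂ) ^ 2 / 2)) * (Λ k : ℂ) ^ 2)
        = (-((τ : ℂ) ^ 2 / 2)) • fun k => (Λ k : ℂ) ^ 2 from rfl,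
      Matrix.diagonal_smul, Matrix.mul_smul, Matrix.smul_mul]
    rw [← hsq]
  have hexp2 : NormedSpace.exp ((-((τ : ℂ) ^ 2 / 2)) • H ^ 2)
      = (U : Matrix (Fin n) (Fin n) ℂ) *
        Matrix.diagonal (fun k => Complex.exp ((-((τ : ℂ) ^ 2 / 2)) * (Λ k : ℂ) ^ 2)) *
        ((U⁻¹ : (Matrix (Fin n) (Fin n) ℂ)ˣ) : Matrix (Fin n) (Fin n) ℂ) := by
    rw [hconj2, Matrix.exp_units_conj, Matrix.exp_diagonal, Pi.exp_def]
    simp only [← Complex.exp_eq_exp_ℂ]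
  have hRHSmat : ((τ : ℂ) • H) ^ m * NormedSpace.exp ((-((τ : ℂ) ^ 2 / 2)) • H ^ 2)
      = (U : Matrix (Fin n) (Fin n) ℂ) *
        Matrix.diagonal (fun k => ((τ : ℂ) * (Λ k : ℂ)) ^ m *
          Complex.exp ((-((τ : ℂ) ^ 2 / 2)) * (Λ k : ℂ) ^ 2)) *
        ((U⁻¹ : (Matrix (Fin n) (Fin n) ℂ)ˣ) : Matrix (Fin n) (Fin n) ℂ) := by
    rw [hpow, hexp2]
    have hassoc : ∀ (A V : Matrix (Fin n) (Fin n) ℂ) (d1 d2 : Fin n → ℂ),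
        A * Matrix.diagonal d1 * V * (A * Matrix.diagonal d2 * V)
          = A * (Matrix.diagonal d1 * ((V * A) * (Matrix.diagonal d2 * V))) := by
      intro A V d1 d2
      simp only [Matrix.mul_assoc]
    rw [hassoc, hmid, Matrix.one_mul, ← Matrix.mul_assoc (Matrix.diagonal _),
      Matrix.diagonal_mul_diagonal, ← Matrix.mul_assoc]
  have hRHS : (((Real.sqrt m.factorial : ℂ))⁻¹ •
      (((τ : ℂ) • H) ^ m * NormedSpace.exp ((-((τ : ℂ) ^ 2 / 2)) • H ^ 2))) i j
      = ∑ k, (U : Matrix (Fin n) (Fin n) ℂ) i k *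
          (((Real.sqrt m.factorial : ℂ))⁻¹ * ((τ : ℂ) * (Λ k : ℂ)) ^ m *
            Complex.exp (-((τ : ℂ) ^ 2 / 2) * (Λ k : ℂ) ^ 2)) *
          ((U⁻¹ : (Matrix (Fin n) (Fin n) ℂ)ˣ) : Matrix (Fin n) (Fin n) ℂ) k j := by
    rw [Matrix.smul_apply, hRHSmat, Matrix.mul_apply, smul_eq_mul, Finset.mul_sum]
    refine Finset.sum_congr rfl fun k _ => ?_
    rw [Matrix.mul_diagonal]
    ring
  rw [hRHS]
  -- LHS
  have hintg : ∀ p : ℝ,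
      Complex.exp (-2 * (p : ℂ) ^ 2) * (hermitePhys m (Real.sqrt 2 * p) : ℂ) *
        (NormedSpace.exp ((-(2 * Complex.I * (τ : ℂ) * (p : ℂ))) • H)) i j
      = ∑ k, (U : Matrix (Fin n) (Fin n) ℂ) i k *
          (Complex.exp (-2 * (p : ℂ) ^ 2) * (hermitePhys m (Real.sqrt 2 * p) : ℂ) *
            Complex.exp ((-(2 * Complex.I * (τ : ℂ) * (p : ℂ))) * (Λ k : ℂ))) *
          ((U⁻¹ : (Matrix (Fin n) (Fin n) ℂ)ˣ) : Matrix (Fin n) (Fin n) ℂ) k j := by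
    intro p
    rw [hexp_entry, Finset.mul_sum]
    refine Finset.sum_congr rfl fun k _ => ?_
    ring
  rw [integral_congr_ae (Filter.Eventually.of_forall hintg)]
  rw [integral_finset_sum _ (fun k _ => by
    exact (((HermiteAux.integrable_base_phase m τ (Λ k)).const_mul
      ((U : Matrix (Fin n) (Fin n) ℂ) i k)).mul_const
      (((U⁻¹ : (Matrix (Fin n) (Fin n) ℂ)ˣ) : Matrix (Fin n) (Fin n) ℂ) k j)))]
  rw [Finset.mul_sum]
  refine Finset.sum_congr rfl fun k _ => ?_
  have hpull : ∫ p : ℝ, (U : Matrix (Fin n) (Fin n) ℂ) i k *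
      (Complex.exp (-2 * (p : ℂ) ^ 2) * (hermitePhys m (Real.sqrt 2 * p) : ℂ) *
        Complex.exp ((-(2 * Complex.I * (τ : ℂ) * (p : ℂ))) * (Λ k : ℂ))) *
      ((U⁻¹ : (Matrix (Fin n) (Fin n) ℂ)ˣ) : Matrix (Fin n) (Fin n) ℂ) k j
      = ((U : Matrix (Fin n) (Fin n) ℂ) i k *
          ((U⁻¹ : (Matrix (Fin n) (Fin n) ℂ)ˣ) : Matrix (Fin n) (Fin n) ℂ) k j) *
        ∫ p : ℝ, Complex.exp (-2 * (p : ℂ) ^ 2) * (hermitePhys m (Real.sqrt 2 * p) : ℂ) *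
          Complex.exp ((-(2 * Complex.I * (τ : ℂ) * (p : ℂ))) * (Λ k : ℂ)) := by
    rw [← integral_const_mul]
    refine integral_congr_ae (Filter.Eventually.of_forall fun p => ?_)
    ring
  rw [hpull]
  have hs := HermiteAux.scalar_main τ (Λ k) m
  calc Complex.I ^ m / (Real.sqrt (Real.pi * 2 ^ (m - 1 : ℤ) * m.factorial) : ℂ) *
      (((U : Matrix (Fin n) (Fin n) ℂ) i k *
          ((U⁻¹ : (Matrix (Fin n) (Fin n) ℂ)ˣ) : Matrix (Fin n) (Fin n) ℂ) k j) *
        ∫ p : ℝ, Complex.exp (-2 * (p : ℂ) ^ 2) * (hermitePhys m (Real.sqrt 2 * p) : ℂ) *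
          Complex.exp ((-(2 * Complex.I * (τ : ℂ) * (p : ℂ))) * (Λ k : ℂ)))
      = ((U : Matrix (Fin n) (Fin n) ℂ) i k *
          ((U⁻¹ : (Matrix (Fin n) (Fin n) ℂ)ˣ) : Matrix (Fin n) (Fin n) ℂ) k j) *
        (Complex.I ^ m / (Real.sqrt (Real.pi * 2 ^ (m - 1 : ℤ) * m.factorial) : ℂ) *
          ∫ p : ℝ, Complex.exp (-2 * (p : ℂ) ^ 2) * (hermitePhys m (Real.sqrt 2 * p) : ℂ) *
            Complex.exp ((-(2 * Complex.I * (τ : ℂ) * (p : ℂ))) * (Λ k : ℂ))) := by ring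
    _ = ((U : Matrix (Fin n) (Fin n) ℂ) i k *
          ((U⁻¹ : (Matrix (Fin n) (Fin n) ℂ)ˣ) : Matrix (Fin n) (Fin n) ℂ) k j) *
        (((Real.sqrt m.factorial : ℂ))⁻¹ * ((τ : ℂ) * (Λ k : ℂ)) ^ m *
          Complex.exp (-((τ : ℂ) ^ 2 / 2) * (Λ k : ℂ) ^ 2)) := by rw [hs]
    _ = (U : Matrix (Fin n) (Fin n) ℂ) i k *
        (((Real.sqrt m.factorial : ℂ))⁻¹ * ((τ : ℂ) * (Λ k : ℂ)) ^ m *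
          Complex.exp (-((τ : ℂ) ^ 2 / 2) * (Λ k : ℂ) ^ 2)) *
        ((U⁻¹ : (Matrix (Fin n) (Fin n) ℂ)ˣ) : Matrix (Fin n) (Fin n) ℂ) k j := by ring
end

section
/- For a Hermitian matrix H' and real parameters α, and for the family of operators P(m,τ) := (τH')ᵐ/√(m!) · exp(-½ τ² H'²) indexed by m ∈ ℕ, the completeness (Kraus) relation Σ_{m=0}^{∞} P(m,τ)† P(m,τ) = I holds, where the series converges in operator norm. -/
open scoped Matrix
open NormedSpace

attribute [local instance] Matrix.linftyOpNormedAddCommGroup Matrix.linftyOpNormedRing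
  Matrix.linftyOpNormedAlgebra

/-- **Kraus completeness relation.** For a Hermitian matrix `H'` and `τ ∈ ℝ`, the operators
`P(m,τ) = (τH')ᵐ/√(m!) · exp(-(τ²/2) H'²)` satisfy `∑ₘ P(m,τ)† P(m,τ) = I`, the series
converging (in the matrix space, where all norms are equivalent). -/
theorem kraus_completeness {n : ℕ}
    (H : Matrix (Fin n) (Fin n) ℂ) (hH : H.IsHermitian) (τ : ℝ) :
    HasSum
      (fun m : ℕ =>
        (((Real.sqrt m.factorial : ℂ))⁻¹ •
            (((τ : ℂ) • H) ^ m * NormedSpace.exp ((-((τ : ℂ) ^ 2 / 2)) • H ^ 2)))ᴴ *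
        (((Real.sqrt m.factorial : ℂ))⁻¹ •
            (((τ : ℂ) • H) ^ m * NormedSpace.exp ((-((τ : ℂ) ^ 2 / 2)) • H ^ 2))))
      (1 : Matrix (Fin n) (Fin n) ℂ) := by
  set t : ℂ := (τ : ℂ) with ht
  set E : Matrix (Fin n) (Fin n) ℂ := exp ((-(t ^ 2 / 2)) • H ^ 2) with hEdef
  set X : Matrix (Fin n) (Fin n) ℂ := (t ^ 2) • H ^ 2 with hX
  have hstar_t : star t = t := by simp [ht]
  have hH2 : (H ^ 2)ᴴ = H ^ 2 := (hH.pow 2).eq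
  have hEherm : Eᴴ = E := by
    rw [hEdef, ← Matrix.exp_conjTranspose, Matrix.conjTranspose_smul, hH2]
    simp [hstar_t]
  have hsum : HasSum (fun m : ℕ => E * ((m.factorial : ℂ)⁻¹ • X ^ m) * E)
      (E * exp X * E) := by
    have h := expSeries_hasSum_exp (𝕂 := ℂ) X
    simp only [expSeries_apply_eq] at h
    exact (h.mul_left E).mul_right E
  have hterm : ∀ m : ℕ,
      (((Real.sqrt m.factorial : ℂ))⁻¹ • ((t • H) ^ m * E))ᴴ *
        (((Real.sqrt m.factorial : ℂ))⁻¹ • ((t • H) ^ m * E))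
      = E * ((m.factorial : ℂ)⁻¹ • X ^ m) * E := by
    intro m
    have hPherm : (((t • H) ^ m))ᴴ = (t • H) ^ m := by
      rw [Matrix.conjTranspose_pow, Matrix.conjTranspose_smul, hstar_t, hH.eq]
    have hc : ((Real.sqrt m.factorial : ℂ))⁻¹ * ((Real.sqrt m.factorial : ℂ))⁻¹
        = (m.factorial : ℂ)⁻¹ := by
      rw [← mul_inv]
      norm_cast
      rw [Real.mul_self_sqrt (by positivity)]
      simp
    rw [Matrix.conjTranspose_smul, Matrix.conjTranspose_mul, hPherm, hEherm]
    rw [Matrix.smul_mul, Matrix.mul_smul, smul_smul]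
    simp only [star_inv₀, Complex.star_def, Complex.conj_ofReal, hc]
    have hpow : (t • H) ^ m * (t • H) ^ m = X ^ m := by
      rw [← pow_add, hX, ← smul_pow, ← pow_mul, two_mul]
    rw [mul_assoc (E) _ _, ← mul_assoc ((t•H)^m), hpow]
    rw [Matrix.mul_smul, Matrix.smul_mul, mul_assoc]
  have hone : E * exp X * E = 1 := by
    have hcomm : Commute ((-(t ^ 2 / 2)) • H ^ 2) X := by
      rw [hX]; exact (Commute.refl (H ^ 2)).smul_left _ |>.smul_right _
    rw [hEdef, ← Matrix.exp_add_of_commute _ _ hcomm]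
    have : (-(t ^ 2 / 2)) • H ^ 2 + X = (t ^ 2 / 2) • H ^ 2 := by
      rw [hX, ← add_smul]; ring_nf
    rw [this, ← Matrix.exp_add_of_commute]
    · rw [← add_smul]
      norm_num [exp_zero]
    · exact (Commute.refl (H ^ 2)).smul_left _ |>.smul_right _
  rw [show (1 : Matrix (Fin n) (Fin n) ℂ) = E * exp X * E from hone.symm]
  simpa only [hterm] using hsum
end
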